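/- Let a, b ∈ ℝ³ with a ≠ b, L = ‖b − a‖, τ = (b − a)/L, and define G(x) = ∫₀^L 1/(4π ‖x − (a + sτ)‖) ds. Then for every x ∈ ℝ³ not in the closed segment [a, b], G is differentiable at x and its directional derivative along τ satisfies τ · ∇G(x) = (1/(4π)) ( 1/‖x − a‖ − 1/‖x − b‖ ). -/

import Mathlib

open MeasureTheory Real

set_option synthInstance.maxHeartbeats 1000000
set_option maxHeartbeats 1000000

lemma hasFDerivAt_invnorm {E : Type*} [NormedAddCommGroup E] [InnerProductSpace ℝ E]
    {v : E} (hv : v ≠ 0) :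
    HasFDerivAt (fun w : E => (4 * Real.pi * ‖w‖)⁻¹)
      ((-(4 * Real.pi * ‖v‖ ^ 3)⁻¹) • (innerSL ℝ v)) v := by
  have hn : ‖v‖ ≠ 0 := norm_ne_zero_iff.mpr hv
  have hn0 : (0:ℝ) < ‖v‖ := norm_pos_iff.mpr hv
  have hπ : (0:ℝ) < 4 * Real.pi := by positivity
  have hn2 : ‖v‖ ^ 2 ≠ 0 := pow_ne_zero _ hn
  have hq : HasFDerivAt (fun w : E => ‖w‖ ^ 2) (2 • innerSL ℝ v) v :=
    (hasStrictFDerivAt_norm_sq v).hasFDerivAt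
  have hs : HasDerivAt (fun t : ℝ => 4 * Real.pi * Real.sqrt t)
      (4 * Real.pi * (1 / (2 * Real.sqrt (‖v‖ ^ 2)))) (‖v‖ ^ 2) :=
    (Real.hasDerivAt_sqrt hn2).const_mul _
  have hsv : Real.sqrt (‖v‖ ^ 2) = ‖v‖ := Real.sqrt_sq (norm_nonneg v)
  have hne : 4 * Real.pi * Real.sqrt (‖v‖ ^ 2) ≠ 0 := by
    rw [hsv]; positivity
  have hinv : HasDerivAt (fun t : ℝ => (4 * Real.pi * Real.sqrt t)⁻¹)
      (-(4 * Real.pi * (1 / (2 * Real.sqrt (‖v‖ ^ 2)))) /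
        (4 * Real.pi * Real.sqrt (‖v‖ ^ 2)) ^ 2) (‖v‖ ^ 2) := hs.inv hne
  have hcomp := hinv.comp_hasFDerivAt v hq
  rw [show ((fun t : ℝ => (4 * Real.pi * Real.sqrt t)⁻¹) ∘ fun w : E => ‖w‖ ^ 2)
      = fun w : E => (4 * Real.pi * ‖w‖)⁻¹ from funext fun w => by
        simp [Function.comp, Real.sqrt_sq (norm_nonneg w)]] at hcomp
  refine hcomp.congr_fderiv ?_
  ext w
  simp only [ContinuousLinearMap.smul_apply, ContinuousLinearMap.coe_smul',
    Pi.smul_apply, smul_eq_mul, hsv]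
  rw [two_smul]
  field_simp
  ring

theorem directional_derivative_of_segment_potential
    (a b : EuclideanSpace ℝ (Fin 3)) (hab : a ≠ b)
    (L : ℝ) (hL : L = ‖b - a‖)
    (τ : EuclideanSpace ℝ (Fin 3)) (hτ : τ = L⁻¹ • (b - a))
    (G : EuclideanSpace ℝ (Fin 3) → ℝ)
    (hG : ∀ y, G y = ∫ s in (0:ℝ)..L, 1 / (4 * Real.pi * ‖y - (a + s • τ)‖))
    (x : EuclideanSpace ℝ (Fin 3)) (hx : x ∉ segment ℝ a b) :
    DifferentiableAt ℝ G x ∧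
    fderiv ℝ G x τ = (1 / (4 * Real.pi)) * (1 / ‖x - a‖ - 1 / ‖x - b‖) := by
  have hπ : (0:ℝ) < Real.pi := Real.pi_pos
  have hL0 : 0 < L := by
    rw [hL]; exact norm_pos_iff.mpr (sub_ne_zero.mpr hab.symm)
  have hLτ : L • τ = b - a := by
    rw [hτ, smul_smul, mul_inv_cancel₀ hL0.ne', one_smul]
  have hb : a + L • τ = b := by rw [hLτ]; abel
  set p : ℝ → EuclideanSpace ℝ (Fin 3) := fun s => a + s • τ with hp
  have hpc : Continuous p := by
    apply continuous_const.add (continuous_id.smul continuous_const)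
  have hseg : ∀ s ∈ Set.Icc (0:ℝ) L, p s ∈ segment ℝ a b := by
    intro s hs
    rw [segment_eq_image']
    refine ⟨s / L, ⟨div_nonneg hs.1 hL0.le, div_le_one_of_le₀ hs.2 hL0.le⟩, ?_⟩
    show a + (s / L) • (b - a) = p s
    rw [← hLτ, smul_smul, div_mul_cancel₀ s hL0.ne']
  set K := p '' Set.Icc 0 L with hK
  have hKc : IsCompact K := isCompact_Icc.image hpc
  have hxK : x ∉ K := fun ⟨s, hs, hsx⟩ => hx (hsx ▸ hseg s hs)
  set d := Metric.infDist x K with hd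
  have hd0 : 0 < d :=
    (hKc.isClosed.notMem_iff_infDist_pos
      ⟨p 0, 0, Set.left_mem_Icc.mpr hL0.le, rfl⟩).mp hxK
  have hd2 : 0 < d / 2 := half_pos hd0
  have hlow : ∀ s ∈ Set.Icc (0:ℝ) L, ∀ y ∈ Metric.ball x (d/2), d/2 ≤ ‖y - p s‖ := by
    intro s hs y hy
    have h1 : d ≤ dist x (p s) := Metric.infDist_le_dist_of_mem ⟨s, hs, rfl⟩
    have h2 : dist y x < d / 2 := Metric.mem_ball.mp hy
    have h3 : dist x (p s) ≤ dist x y + dist y (p s) := dist_triangle _ _ _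
    have h4 : dist x y = dist y x := dist_comm _ _
    rw [← dist_eq_norm]
    linarith
  have hxlow : ∀ s ∈ Set.Icc (0:ℝ) L, d/2 ≤ ‖x - p s‖ :=
    fun s hs => hlow s hs x (Metric.mem_ball_self hd2)
  have hIccI : Set.uIcc (0:ℝ) L = Set.Icc 0 L := Set.uIcc_of_le hL0.le
  have hIocI : Set.uIoc (0:ℝ) L = Set.Ioc 0 L := Set.uIoc_of_le hL0.le
  set F : EuclideanSpace ℝ (Fin 3) → ℝ → ℝ :=
    fun y s => (4 * Real.pi * ‖y - p s‖)⁻¹ with hFdef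
  set F' : EuclideanSpace ℝ (Fin 3) → ℝ → (EuclideanSpace ℝ (Fin 3) →L[ℝ] ℝ) :=
    fun y s => (-(4 * Real.pi * ‖y - p s‖ ^ 3)⁻¹) • innerSL ℝ (y - p s) with hF'def
  have hGeq : G = fun y => ∫ s in (0:ℝ)..L, F y s := by
    funext y; rw [hG y]; simp only [hFdef, one_div]; rfl
  have hcn : ∀ y : EuclideanSpace ℝ (Fin 3), Continuous fun s => ‖y - p s‖ :=
    fun y => (continuous_const.sub hpc).norm
  -- measurability of F y
  have hF_meas : ∀ᶠ y in nhds x,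
      AEStronglyMeasurable (F y) (volume.restrict (Set.uIoc (0:ℝ) L)) := by
    refine Filter.Eventually.of_forall fun y => ?_
    exact ((continuous_const.mul (hcn y)).measurable.inv).aestronglyMeasurable
  have hF_int : IntervalIntegrable (F x) volume 0 L := by
    apply ContinuousOn.intervalIntegrable
    rw [hIccI]
    refine (continuous_const.mul (hcn x)).continuousOn.inv₀ fun s hs => ?_
    have := hxlow s hs
    exact mul_ne_zero (by positivity) (by linarith)
  have hF'cont : ContinuousOn (F' x) (Set.Icc (0:ℝ) L) := by
    apply ContinuousOn.fun_smul
    · refine ContinuousOn.neg ?_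
      refine (continuous_const.mul ((hcn x).pow 3)).continuousOn.inv₀ fun s hs => ?_
      have h0 : (0:ℝ) < ‖x - p s‖ := lt_of_lt_of_le hd2 (hxlow s hs)
      have h3 : (0:ℝ) < ‖x - p s‖ ^ 3 := pow_pos h0 3
      exact mul_ne_zero (by positivity) (ne_of_gt h3)
    · exact ((innerSL ℝ).continuous.comp (continuous_const.sub hpc)).continuousOn
  have hF'_meas : AEStronglyMeasurable (F' x) (volume.restrict (Set.uIoc (0:ℝ) L)) := by
    apply (hF'cont.mono _).aestronglyMeasurable measurableSet_uIoc
    rw [hIocI]; exact Set.Ioc_subset_Icc_self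
  have h_bound : ∀ᵐ s ∂(volume : Measure ℝ), s ∈ Set.uIoc (0:ℝ) L →
      ∀ y ∈ Metric.ball x (d/2), ‖F' y s‖ ≤ (4 * Real.pi)⁻¹ * ((d/2)^2)⁻¹ := by
    refine Filter.Eventually.of_forall fun s hs y hy => ?_
    have hs' : s ∈ Set.Icc (0:ℝ) L := Set.Ioc_subset_Icc_self (hIocI ▸ hs)
    have hv : d/2 ≤ ‖y - p s‖ := hlow s hs' y hy
    have hv0 : (0:ℝ) < ‖y - p s‖ := lt_of_lt_of_le hd2 hv
    simp only [hF'def]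
    have hns : (-(4 * Real.pi * ‖y - p s‖ ^ 3)⁻¹) • innerSL ℝ (y - p s)
        = innerSL ℝ ((-(4 * Real.pi * ‖y - p s‖ ^ 3)⁻¹) • (y - p s)) :=
      (map_smul (innerSL ℝ) _ _).symm
    rw [hns, innerSL_apply_norm, norm_smul, Real.norm_eq_abs, abs_neg, abs_inv,
      abs_of_pos (mul_pos (show (0:ℝ) < 4 * Real.pi by positivity) (pow_pos hv0 3))]
    have heq : (4 * Real.pi * ‖y - p s‖ ^ 3)⁻¹ * ‖y - p s‖
        = (4 * Real.pi)⁻¹ * (‖y - p s‖ ^ 2)⁻¹ := by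
      field_simp
    rw [heq]
    gcongr
  have bound_int : IntervalIntegrable (fun _ : ℝ => (4 * Real.pi)⁻¹ * ((d/2)^2)⁻¹)
      volume 0 L := intervalIntegrable_const
  have h_diff : ∀ᵐ s ∂(volume : Measure ℝ), s ∈ Set.uIoc (0:ℝ) L →
      ∀ y ∈ Metric.ball x (d/2), HasFDerivAt (fun z => F z s) (F' y s) y := by
    refine Filter.Eventually.of_forall fun s hs y hy => ?_
    have hs' : s ∈ Set.Icc (0:ℝ) L := Set.Ioc_subset_Icc_self (hIocI ▸ hs)
    have hv : d/2 ≤ ‖y - p s‖ := hlow s hs' y hy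
    have hvne : y - p s ≠ 0 := by
      intro h; rw [h, norm_zero] at hv; linarith
    have h1 := hasFDerivAt_invnorm hvne
    have h2 : HasFDerivAt (fun z : EuclideanSpace ℝ (Fin 3) => z - p s)
        (ContinuousLinearMap.id ℝ _) y := (hasFDerivAt_id y).sub_const (p s)
    have h3 := h1.comp y h2
    rw [ContinuousLinearMap.comp_id] at h3
    exact h3
  have hMain := intervalIntegral.hasFDerivAt_integral_of_dominated_of_fderiv_le
    (Metric.ball_mem_nhds x hd2) hF_meas hF_int hF'_meas h_bound bound_int h_diff
  have hGderiv : HasFDerivAt G (∫ s in (0:ℝ)..L, F' x s) x := by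
    rw [hGeq]; exact hMain
  refine ⟨hGderiv.differentiableAt, ?_⟩
  rw [hGderiv.fderiv]
  -- apply to τ
  have hF'int : IntervalIntegrable (F' x) volume 0 L := by
    apply ContinuousOn.intervalIntegrable; rw [hIccI]; exact hF'cont
  rw [ContinuousLinearMap.intervalIntegral_apply hF'int τ]
  -- FTC
  have hderiv : ∀ s ∈ Set.uIcc (0:ℝ) L,
      HasDerivAt (fun s => -(4 * Real.pi * ‖x - p s‖)⁻¹) (F' x s τ) s := by
    intro s hs
    have hs' : s ∈ Set.Icc (0:ℝ) L := hIccI ▸ hs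
    have hv : d/2 ≤ ‖x - p s‖ := hxlow s hs'
    have hvne : x - p s ≠ 0 := by
      intro h; rw [h, norm_zero] at hv; linarith
    have hw : HasDerivAt (fun s : ℝ => x - p s) (-τ) s := by
      have h1 : HasDerivAt (fun s : ℝ => s • τ) τ s := by
        simpa using (hasDerivAt_id s).smul_const τ
      exact (h1.const_add a).const_sub x
    have h2 := (hasFDerivAt_invnorm hvne).comp_hasDerivAt s hw
    have h3 := h2.neg
    have h4 : HasDerivAt (fun s => -(4 * Real.pi * ‖x - p s‖)⁻¹) _ s := h3
    refine h4.congr_deriv ?_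
    simp only [hF'def,ContinuousLinearMap.neg_apply, ContinuousLinearMap.smul_apply,
      innerSL_apply_apply, inner_neg_right, smul_eq_mul]
    ring
  have hτint : IntervalIntegrable (fun s => F' x s τ) volume 0 L := by
    apply ContinuousOn.intervalIntegrable
    rw [hIccI]
    exact hF'cont.clm_apply continuousOn_const
  rw [intervalIntegral.integral_eq_sub_of_hasDerivAt hderiv hτint]
  have hp0 : p 0 = a := by simp [hp]
  have hpL : p L = b := by rw [hp]; exact hb
  rw [hp0, hpL]
  have hxa : ‖x - a‖ ≠ 0 := by
    have : x ≠ a := fun h => hx (h ▸ left_mem_segment ℝ a b)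
    simpa [sub_eq_zero] using this
  have hxb : ‖x - b‖ ≠ 0 := by
    have : x ≠ b := fun h => hx (h ▸ right_mem_segment ℝ a b)
    simpa [sub_eq_zero] using this
  field_simp
  ring
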